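/- Let k ≥ 2 and let A be an n×n 0-1 matrix with A^k = A. Suppose D(A) contains two disjoint directed cycles C and C' whose lengths both divide k−1. Then D(A) contains no directed path from any vertex of C to any vertex of C'. -/

import Mathlib

open Matrix
open Fin.NatCast

/-- A 0-1 matrix over the integers. -/
def IsZeroOne {α β : Type*} (A : Matrix α β ℤ) : Prop :=
  ∀ i j, A i j = 0 ∨ A i j = 1

lemma powEntryNonneg {n : ℕ} (A : Matrix (Fin n) (Fin n) ℤ) (hA : ∀ i j, 0 ≤ A i j)
    (m : ℕ) : ∀ i j, 0 ≤ (A ^ m) i j := by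
  induction m with
  | zero =>
    intro i j
    rw [pow_zero, Matrix.one_apply]
    split <;> norm_num
  | succ m ih =>
    intro i j
    rw [pow_succ, Matrix.mul_apply]
    exact Finset.sum_nonneg fun x _ => mul_nonneg (ih i x) (hA x j)

lemma oneLePowWalk {n : ℕ} (A : Matrix (Fin n) (Fin n) ℤ) (hA : ∀ i j, 0 ≤ A i j)
    (m : ℕ) (v : ℕ → Fin n) (hv : ∀ i < m, A (v i) (v (i + 1)) = 1) :
    1 ≤ (A ^ m) (v 0) (v m) := by
  induction m with
  | zero => simp [Matrix.one_apply]
  | succ m ih =>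
    rw [pow_succ, Matrix.mul_apply]
    have h1 : 1 ≤ (A ^ m) (v 0) (v m) := ih (fun i hi => hv i (by omega))
    calc (1 : ℤ) ≤ (A ^ m) (v 0) (v m) * A (v m) (v (m + 1)) := by
          rw [hv m (by omega)]; simpa using h1
      _ ≤ ∑ x, (A ^ m) (v 0) x * A x (v (m + 1)) :=
          Finset.single_le_sum (f := fun x => (A ^ m) (v 0) x * A x (v (m + 1)))
            (fun x _ => mul_nonneg (powEntryNonneg A hA m _ _) (hA _ _)) (Finset.mem_univ _)

/-- Extend a walk `w` of length `ℓ` by going around the cycle `c'` afterwards. -/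
def extWalk {n q : ℕ} [NeZero q] (ℓ : ℕ) (w : Fin (ℓ + 1) → Fin n)
    (c' : Fin q → Fin n) (b : Fin q) (i : ℕ) : Fin n :=
  if h : i ≤ ℓ then w ⟨i, Nat.lt_succ_of_le h⟩ else c' (b + ((i - ℓ : ℕ) : Fin q))

theorem stmt15 {n k p q : ℕ} [NeZero p] [NeZero q] (hk : 2 ≤ k)
    (A : Matrix (Fin n) (Fin n) ℤ) (h01 : IsZeroOne A) (hA : A ^ k = A)
    (hp : p ∣ k - 1) (hq : q ∣ k - 1)
    (c : Fin p → Fin n) (c' : Fin q → Fin n)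
    (hc : Function.Injective c) (hc' : Function.Injective c')
    (hdisj : Disjoint (Set.range c) (Set.range c'))
    -- the subdigraph induced on the vertices of each cycle is exactly the cycle
    (hCind : ∀ i j : Fin p, A (c i) (c j) = 1 ↔ j = i + 1)
    (hC'ind : ∀ i j : Fin q, A (c' i) (c' j) = 1 ↔ j = i + 1) :
    ¬ ∃ (ℓ : ℕ) (w : Fin (ℓ + 1) → Fin n),
        Function.Injective w ∧
        w 0 ∈ Set.range c ∧ w (Fin.last ℓ) ∈ Set.range c' ∧
        ∀ i : Fin ℓ, A (w i.castSucc) (w i.succ) = 1 := by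
  rintro ⟨ℓ, w, hw, ⟨a, ha⟩, ⟨b, hb⟩, hwalk⟩
  have hA0 : ∀ i j, 0 ≤ A i j := fun i j => by rcases h01 i j with h | h <;> simp [h]
  rcases Nat.eq_zero_or_pos ℓ with hℓ0 | hℓ
  · subst hℓ0
    have h0 : w 0 = w (Fin.last 0) := by congr
    exact Set.disjoint_left.mp hdisj ⟨a, ha⟩ ⟨b, by rw [hb, ← h0]⟩
  set K := k - 1 with hK
  have hKpos : 1 ≤ K := by omega
  -- the extended walk
  set u : ℕ → Fin n := extWalk ℓ w c' b with hu_def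
  have hu0 : u 0 = c a := by
    rw [hu_def, extWalk, dif_pos (Nat.zero_le ℓ)]
    exact ha.symm
  have huℓ : ∀ i, ℓ < i → u i = c' (b + ((i - ℓ : ℕ) : Fin q)) := by
    intro i hi
    rw [hu_def, extWalk, dif_neg (by omega)]
  have hu_edge : ∀ i, A (u i) (u (i + 1)) = 1 := by
    intro i
    by_cases h1 : i + 1 ≤ ℓ
    · have hui : u i = w (Fin.castSucc ⟨i, by omega⟩) := by
        rw [hu_def, extWalk, dif_pos (by omega)]; rfl
      have hui1 : u (i + 1) = w (Fin.succ ⟨i, by omega⟩) := by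
        rw [hu_def, extWalk, dif_pos h1]; rfl
      rw [hui, hui1]; exact hwalk ⟨i, by omega⟩
    · by_cases h2 : i ≤ ℓ
      · have hiℓ : i = ℓ := by omega
        subst hiℓ
        have hui : u i = c' b := by
          rw [hu_def, extWalk, dif_pos le_rfl, hb]; rfl
        have hui1 : u (i + 1) = c' (b + 1) := by
          rw [huℓ (i + 1) (by omega)]
          congr 1
          have : i + 1 - i = 1 := by omega
          rw [this, Nat.cast_one]
        rw [hui, hui1]
        exact (hC'ind b (b + 1)).mpr rfl
      · have hui : u i = c' (b + ((i - ℓ : ℕ) : Fin q)) := huℓ i (by omega)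
        have hui1 : u (i + 1) = c' (b + ((i - ℓ : ℕ) : Fin q) + 1) := by
          rw [huℓ (i + 1) (by omega)]
          congr 1
          have h3 : i + 1 - ℓ = (i - ℓ) + 1 := by omega
          rw [h3, Nat.cast_add, Nat.cast_one, add_assoc]
        rw [hui, hui1]
        exact (hC'ind _ _).mpr rfl
  -- 1 ≤ (A^ℓ) (c a) (c' b)
  have huKℓ : u (K + ℓ) = c' b := by
    rw [huℓ (K + ℓ) (by omega)]
    have h3 : K + ℓ - ℓ = K := by omega
    rw [h3, (Fin.natCast_eq_zero).mpr hq, add_zero]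
  have huℓeq : u ℓ = c' b := by
    rw [hu_def, extWalk, dif_pos le_rfl, hb]; rfl
  have ht : 1 ≤ (A ^ ℓ) (c a) (c' b) := by
    have := oneLePowWalk A hA0 ℓ u (fun i _ => hu_edge i)
    rwa [hu0, huℓeq] at this
  -- 1 ≤ (A^K) (c a) (u K)
  have hprefix : 1 ≤ (A ^ K) (c a) (u K) := by
    have := oneLePowWalk A hA0 K u (fun i _ => hu_edge i)
    rwa [hu0] at this
  -- 1 ≤ (A^ℓ) (u K) (c' b)
  have hsuffix : 1 ≤ (A ^ ℓ) (u K) (c' b) := by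
    have := oneLePowWalk A hA0 ℓ (fun j => u (K + j)) (fun i _ => hu_edge (K + i))
    simpa [huKℓ] using this
  -- 1 ≤ (A^K) (c a) (c a) : go around the cycle C
  have hcyc : 1 ≤ (A ^ K) (c a) (c a) := by
    have := oneLePowWalk A hA0 K (fun i => c (a + (i : Fin p)))
      (fun i _ => by
        refine (hCind _ _).mpr ?_
        rw [Nat.cast_add, Nat.cast_one, add_assoc])
    simpa [(Fin.natCast_eq_zero).mpr hp] using this
  -- u K ≠ c a
  have hne : u K ≠ c a := by
    by_cases hKℓ : K ≤ ℓ
    · rw [hu_def, extWalk, dif_pos hKℓ]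
      intro hcon
      have : w (⟨K, by omega⟩ : Fin (ℓ + 1)) = w 0 := by rw [hcon, ← ha]
      have h0 : (⟨K, by omega⟩ : Fin (ℓ + 1)) = 0 := hw this
      have hK0 : K = 0 := by simpa using congrArg Fin.val h0
      omega
    · rw [huℓ K (by omega)]
      intro hcon
      exact Set.disjoint_left.mp hdisj ⟨a, rfl⟩ ⟨_, hcon⟩
  -- key: A^(K+ℓ) = A^ℓ
  have key : A ^ (K + ℓ) = A ^ ℓ := by
    have h1 : K + ℓ = k + (ℓ - 1) := by omega
    have h2 : ℓ - 1 + 1 = ℓ := by omega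
    calc A ^ (K + ℓ) = A ^ k * A ^ (ℓ - 1) := by rw [h1, pow_add]
      _ = A ^ (ℓ - 1 + 1) := by rw [hA, pow_succ']
      _ = A ^ ℓ := by rw [h2]
  -- expand and derive contradiction
  have expand : (A ^ (K + ℓ)) (c a) (c' b)
      = ∑ x, (A ^ K) (c a) x * (A ^ ℓ) x (c' b) := by
    rw [pow_add, Matrix.mul_apply]
  rw [key] at expand
  have hsum : (A ^ K) (c a) (c a) * (A ^ ℓ) (c a) (c' b)
      + (A ^ K) (c a) (u K) * (A ^ ℓ) (u K) (c' b)
      ≤ ∑ x, (A ^ K) (c a) x * (A ^ ℓ) x (c' b) := by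
    have hsub := Finset.sum_le_sum_of_subset_of_nonneg
      (f := fun x => (A ^ K) (c a) x * (A ^ ℓ) x (c' b))
      (s := ({c a, u K} : Finset (Fin n))) (Finset.subset_univ _)
      (fun x _ _ => mul_nonneg (powEntryNonneg A hA0 K _ _) (powEntryNonneg A hA0 ℓ _ _))
    rwa [Finset.sum_pair (Ne.symm hne)] at hsub
  have h5 : (A ^ K) (c a) (c a) * (A ^ ℓ) (c a) (c' b)
      + (A ^ K) (c a) (u K) * (A ^ ℓ) (u K) (c' b)
      ≤ (A ^ ℓ) (c a) (c' b) := expand ▸ hsum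
  nlinarith [h5, ht, hcyc, hprefix, hsuffix]
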